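/- The average pairwise distance does not satisfy the uniqueness property: there exists a set of 4 distinct real numbers such that replacing one of its elements with a duplicate of another element strictly increases the average pairwise distance (with distances induced from the real line). -/

import Mathlib

open Finset

/-- Average pairwise distance of a 4-tuple of reals (distance induced from the real line). -/
noncomputable def avg4 (f : Fin 4 → ℝ) : ℝ :=
  (2 / ((4 : ℝ) * 3)) * ∑ i, ∑ j ∈ Finset.univ.filter (fun j : Fin 4 => i < j), |f i - f j|

lemma avg4_eq (f : Fin 4 → ℝ) : avg4 f =
    (2 / ((4:ℝ)*3)) * (|f 0 - f 1| + |f 0 - f 2| + |f 0 - f 3| + |f 1 - f 2| +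
      |f 1 - f 3| + |f 2 - f 3|) := by
  have h0 : Finset.univ.filter (fun j : Fin 4 => (0:Fin 4) < j) = {1,2,3} := by decide
  have h1 : Finset.univ.filter (fun j : Fin 4 => (1:Fin 4) < j) = {2,3} := by decide
  have h2 : Finset.univ.filter (fun j : Fin 4 => (2:Fin 4) < j) = {3} := by decide
  have h3 : Finset.univ.filter (fun j : Fin 4 => (3:Fin 4) < j) = ∅ := by decide
  unfold avg4
  rw [Fin.sum_univ_four, h0, h1, h2, h3]
  simp [Finset.sum_insert, Finset.sum_pair]
  ring

/-- The average pairwise distance does not satisfy uniqueness: there is a 4-tuple of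
distinct reals such that replacing one element by a duplicate of another strictly
increases the average pairwise distance. -/
theorem average_not_unique :
    ∃ x : Fin 4 → ℝ, Function.Injective x ∧
      ∃ i j : Fin 4, i ≠ j ∧ avg4 x < avg4 (Function.update x i (x j)) := by
  refine ⟨![0, 10, 11, 12], ?_, 1, 0, by decide, ?_⟩
  · intro a b h
    fin_cases a <;> fin_cases b <;> simp_all
  · rw [avg4_eq, avg4_eq]
    norm_num [Function.update, show (2:Fin 4) ≠ 1 by decide, show (3:Fin 4) ≠ 1 by decide,
      show (![0, 10, 11, 12] : Fin 4 → ℝ) 2 = 11 from rfl, show (![0, 10, 11, 12] : Fin 4 → ℝ) 3 = 12 from rfl]
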